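/- The map ρ: VB_n → GL_n(Z[s]/(s^2)) defined by sending σ_i to I_{i-1} ⊕ [[0,1],[1,0]] ⊕ I_{n-i-1} and τ_i to I_{i-1} ⊕ [[s,1+s],[1-s,-s]] ⊕ I_{n-i-1} respects all the defining relations of the virtual braid group VB_n: σ_iσ_j = σ_jσ_i and σ_iτ_j = τ_jσ_i and τ_iτ_j = τ_jτ_i for |i-j|>1, σ_iσ_{i+1}σ_i = σ_{i+1}σ_iσ_{i+1}, τ_i^2 = 1, τ_iτ_{i+1}τ_i = τ_{i+1}τ_iτ_{i+1}, and σ_iτ_{i+1}τ_i = τ_{i+1}τ_iσ_{i+1}. -/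
import Mathlib


open DualNumber

/-- image of the real crossing generator σ (0-indexed: block at rows i, i+1) -/
noncomputable def sigmaMat (n i : ℕ) : Matrix (Fin n) (Fin n) (DualNumber ℤ) :=
  fun k l =>
    if (k : ℕ) = i then (if (l : ℕ) = i + 1 then 1 else 0)
    else if (k : ℕ) = i + 1 then (if (l : ℕ) = i then 1 else 0)
    else if k = l then 1 else 0

/-- image of the virtual crossing generator τ (0-indexed: block at rows i, i+1) -/
noncomputable def tauMat (n i : ℕ) : Matrix (Fin n) (Fin n) (DualNumber ℤ) :=
  fun k l =>
    if (k : ℕ) = i then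
      (if (l : ℕ) = i then eps else if (l : ℕ) = i + 1 then 1 + eps else 0)
    else if (k : ℕ) = i + 1 then
      (if (l : ℕ) = i then 1 - eps else if (l : ℕ) = i + 1 then -eps else 0)
    else if k = l then 1 else 0

lemma sum_two {n : ℕ} (a b : ℕ) (ha : a < n) (hb : b < n) (hab : a ≠ b)
    (f g : Fin n → DualNumber ℤ) :
    (∑ m : Fin n, (if (m : ℕ) = a then f m else if (m : ℕ) = b then g m else 0))
      = f ⟨a, ha⟩ + g ⟨b, hb⟩ := by
  have h : ∀ m : Fin n, (if (m : ℕ) = a then f m else if (m : ℕ) = b then g m else 0)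
      = (if m = ⟨a, ha⟩ then f ⟨a, ha⟩ else 0) + (if m = ⟨b, hb⟩ then g ⟨b, hb⟩ else 0) := by
    intro m
    by_cases h1 : (m : ℕ) = a
    · have hm : m = ⟨a, ha⟩ := Fin.ext h1
      subst hm; simp [Fin.ext_iff, hab]
    · by_cases h2 : (m : ℕ) = b
      · have hm : m = ⟨b, hb⟩ := Fin.ext h2
        subst hm; simp_all [Fin.ext_iff]
      · simp [h1, h2, Fin.ext_iff]
  rw [Finset.sum_congr rfl (fun m _ => h m), Finset.sum_add_distrib]
  simp [Finset.sum_ite_eq']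

lemma sum_one {n : ℕ} (a : ℕ) (ha : a < n) (f : Fin n → DualNumber ℤ) :
    (∑ m : Fin n, (if (m : ℕ) = a then f m else 0)) = f ⟨a, ha⟩ := by
  have h : ∀ m : Fin n, (if (m : ℕ) = a then f m else 0)
      = (if m = ⟨a, ha⟩ then f ⟨a, ha⟩ else 0) := by
    intro m
    by_cases h1 : (m : ℕ) = a
    · have hm : m = ⟨a, ha⟩ := Fin.ext h1
      subst hm; simp
    · simp [h1, Fin.ext_iff]
  rw [Finset.sum_congr rfl (fun m _ => h m)]
  simp [Finset.sum_ite_eq']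

lemma sum_diag {n : ℕ} (k : Fin n) (f : Fin n → DualNumber ℤ) :
    (∑ m : Fin n, (if k = m then f m else 0)) = f k := by
  simp [Finset.sum_ite_eq]

lemma sigma_mul_apply {n : ℕ} (i : ℕ) (hi : i + 1 < n)
    (B : Matrix (Fin n) (Fin n) (DualNumber ℤ)) (k l : Fin n) :
    (sigmaMat n i * B) k l =
      if (k : ℕ) = i then B ⟨i + 1, hi⟩ l
      else if (k : ℕ) = i + 1 then B ⟨i, by omega⟩ l
      else B k l := by
  rw [Matrix.mul_apply]
  by_cases hk : (k : ℕ) = i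
  · rw [if_pos hk,
      Finset.sum_congr rfl (fun x _ => show sigmaMat n i k x * B x l
        = if (x : ℕ) = i + 1 then B x l else 0 by
          unfold sigmaMat; rw [if_pos hk]; split_ifs <;> simp),
      sum_one (i + 1) hi]
  · rw [if_neg hk]
    by_cases hk' : (k : ℕ) = i + 1
    · rw [if_pos hk',
        Finset.sum_congr rfl (fun x _ => show sigmaMat n i k x * B x l
          = if (x : ℕ) = i then B x l else 0 by
            unfold sigmaMat; rw [if_neg hk, if_pos hk']; split_ifs <;> simp),
        sum_one i (Nat.lt_of_succ_lt hi)]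
    · rw [if_neg hk',
        Finset.sum_congr rfl (fun x _ => show sigmaMat n i k x * B x l
          = if k = x then B x l else 0 by
            unfold sigmaMat; rw [if_neg hk, if_neg hk']; split_ifs <;> simp),
        sum_diag]

lemma tau_mul_apply {n : ℕ} (i : ℕ) (hi : i + 1 < n)
    (B : Matrix (Fin n) (Fin n) (DualNumber ℤ)) (k l : Fin n) :
    (tauMat n i * B) k l =
      if (k : ℕ) = i then eps * B ⟨i, by omega⟩ l + (1 + eps) * B ⟨i + 1, hi⟩ l
      else if (k : ℕ) = i + 1 then (1 - eps) * B ⟨i, by omega⟩ l + (-eps) * B ⟨i + 1, hi⟩ l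
      else B k l := by
  rw [Matrix.mul_apply]
  by_cases hk : (k : ℕ) = i
  · rw [if_pos hk,
      Finset.sum_congr rfl (fun x _ => show tauMat n i k x * B x l
        = (if (x : ℕ) = i then eps * B x l else if (x : ℕ) = i + 1 then (1 + eps) * B x l else 0) by
          unfold tauMat; rw [if_pos hk]; split_ifs <;> simp),
      sum_two i (i + 1) (Nat.lt_of_succ_lt hi) hi (Nat.succ_ne_self i).symm]
  · rw [if_neg hk]
    by_cases hk' : (k : ℕ) = i + 1
    · rw [if_pos hk',
        Finset.sum_congr rfl (fun x _ => show tauMat n i k x * B x l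
          = (if (x : ℕ) = i then (1 - eps) * B x l else if (x : ℕ) = i + 1 then (-eps) * B x l else 0) by
            unfold tauMat; rw [if_neg hk, if_pos hk']; split_ifs <;> simp),
        sum_two i (i + 1) (Nat.lt_of_succ_lt hi) hi (Nat.succ_ne_self i).symm]
    · rw [if_neg hk',
        Finset.sum_congr rfl (fun x _ => show tauMat n i k x * B x l
          = if k = x then B x l else 0 by
            unfold tauMat; rw [if_neg hk, if_neg hk']; split_ifs <;> simp),
        sum_diag]

lemma eps_sq : (eps : DualNumber ℤ) ^ 2 = 0 := by rw [sq]; exact eps_mul_eps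

lemma eps_cube : (eps : DualNumber ℤ) ^ 3 = 0 := by rw [pow_succ, eps_sq, zero_mul]

set_option maxHeartbeats 1000000 in
theorem stmt_4 (n : ℕ) :
    (∀ i j : ℕ, i + 1 < n → j + 1 < n → (i + 1 < j ∨ j + 1 < i) →
      sigmaMat n i * sigmaMat n j = sigmaMat n j * sigmaMat n i ∧
      sigmaMat n i * tauMat n j = tauMat n j * sigmaMat n i ∧
      tauMat n i * tauMat n j = tauMat n j * tauMat n i) ∧
    (∀ i : ℕ, i + 2 < n →
      sigmaMat n i * sigmaMat n (i + 1) * sigmaMat n i =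
        sigmaMat n (i + 1) * sigmaMat n i * sigmaMat n (i + 1)) ∧
    (∀ i : ℕ, i + 1 < n → tauMat n i * tauMat n i = 1) ∧
    (∀ i : ℕ, i + 2 < n →
      tauMat n i * tauMat n (i + 1) * tauMat n i =
        tauMat n (i + 1) * tauMat n i * tauMat n (i + 1)) ∧
    (∀ i : ℕ, i + 2 < n →
      sigmaMat n i * tauMat n (i + 1) * tauMat n i =
        tauMat n (i + 1) * tauMat n i * sigmaMat n (i + 1)) := by
  refine ⟨?_, ?_, ?_, ?_, ?_⟩
  · intro i j hi hj hij
    have d1 : i ≠ j := by omega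
    have d2 : i ≠ j + 1 := by omega
    have d3 : i + 1 ≠ j := by omega
    have d4 : i + 1 ≠ j + 1 := by omega
    have d5 : j ≠ i := by omega
    have d6 : j ≠ i + 1 := by omega
    have d7 : j + 1 ≠ i := by omega
    have d8 : j + 1 ≠ i + 1 := by omega
    refine ⟨Matrix.ext fun k l => ?_, Matrix.ext fun k l => ?_, Matrix.ext fun k l => ?_⟩ <;>
      · simp only [sigma_mul_apply i hi, sigma_mul_apply j hj,
          tau_mul_apply i hi, tau_mul_apply j hj]
        by_cases h1 : (k : ℕ) = i <;> by_cases h2 : (k : ℕ) = i + 1 <;>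
          by_cases h3 : (k : ℕ) = j <;> by_cases h4 : (k : ℕ) = j + 1 <;>
          first
            | omega
            | (simp only [sigmaMat, tauMat, h1, h2, h3, h4, d1, d2, d3, d4, d5, d6, d7, d8,
                 Fin.ext_iff, if_true, if_false, ite_true, ite_false, Fin.val_mk,
                 eq_self_iff_true, ne_eq, not_false_eq_true, if_neg, if_pos]
               try (first
                 | (split_ifs <;> first | rfl | omega | ring_nf)
                 | rfl
                 | omega
                 | ring_nf))
  · intro i hi
    have h1 : i + 1 < n := by omega
    have h2 : i + 2 < n := hi
    have e1 : i ≠ i + 1 := by omega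
    have e2 : i ≠ i + 2 := by omega
    have e3 : i + 1 ≠ i + 2 := by omega
    have e4 : i + 1 ≠ i := by omega
    have e5 : i + 2 ≠ i := by omega
    have e6 : i + 2 ≠ i + 1 := by omega
    refine Matrix.ext fun k l => ?_
    rw [mul_assoc, mul_assoc]
    simp only [sigma_mul_apply i h1, sigma_mul_apply (i + 1) h2]
    by_cases hk1 : (k : ℕ) = i <;> by_cases hk2 : (k : ℕ) = i + 1 <;>
      by_cases hk3 : (k : ℕ) = i + 2 <;>
      by_cases hl1 : (l : ℕ) = i <;> by_cases hl2 : (l : ℕ) = i + 1 <;>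
      by_cases hl3 : (l : ℕ) = i + 2 <;>
      first
        | omega
        | (simp only [sigmaMat, tauMat, Fin.ext_iff, Fin.val_mk,
             hk1, hk2, hk3, hl1, hl2, hl3, e1, e2, e3, e4, e5, e6,
             if_true, if_false, ite_true, ite_false, eq_self_iff_true,
             ne_eq, not_false_eq_true, if_neg, if_pos]
           try (first
             | (split_ifs <;> (first
                 | rfl
                 | omega
                 | (ring_nf; simp [eps_sq, eps_cube, eps_mul_eps]; try ring_nf)))
             | rfl
             | omega
             | (ring_nf; simp [eps_sq, eps_cube, eps_mul_eps]; try ring_nf)))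
  · intro i hi
    refine Matrix.ext fun k l => ?_
    simp only [tau_mul_apply i hi]
    simp only [tauMat, Matrix.one_apply]
    simp [Fin.ext_iff]
    try (first
      | (split_ifs <;> first | rfl | omega | (ring_nf; simp [eps_sq, eps_cube, eps_mul_eps]))
      | rfl
      | omega
      | (ring_nf; simp [eps_sq, eps_cube, eps_mul_eps]))
  · intro i hi
    have h1 : i + 1 < n := by omega
    have h2 : i + 2 < n := hi
    have e1 : i ≠ i + 1 := by omega
    have e2 : i ≠ i + 2 := by omega
    have e3 : i + 1 ≠ i + 2 := by omega
    have e4 : i + 1 ≠ i := by omega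
    have e5 : i + 2 ≠ i := by omega
    have e6 : i + 2 ≠ i + 1 := by omega
    refine Matrix.ext fun k l => ?_
    rw [mul_assoc, mul_assoc]
    simp only [tau_mul_apply i h1, tau_mul_apply (i + 1) h2]
    by_cases hk1 : (k : ℕ) = i <;> by_cases hk2 : (k : ℕ) = i + 1 <;>
      by_cases hk3 : (k : ℕ) = i + 2 <;>
      by_cases hl1 : (l : ℕ) = i <;> by_cases hl2 : (l : ℕ) = i + 1 <;>
      by_cases hl3 : (l : ℕ) = i + 2 <;>
      first
        | omega
        | (simp only [sigmaMat, tauMat, Fin.ext_iff, Fin.val_mk,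
             hk1, hk2, hk3, hl1, hl2, hl3, e1, e2, e3, e4, e5, e6,
             if_true, if_false, ite_true, ite_false, eq_self_iff_true,
             ne_eq, not_false_eq_true, if_neg, if_pos]
           try (first
             | (split_ifs <;> (first
                 | rfl
                 | omega
                 | (ring_nf; simp [eps_sq, eps_cube, eps_mul_eps]; try ring_nf)))
             | rfl
             | omega
             | (ring_nf; simp [eps_sq, eps_cube, eps_mul_eps]; try ring_nf)))
  · intro i hi
    have h1 : i + 1 < n := by omega
    have h2 : i + 2 < n := hi
    have e1 : i ≠ i + 1 := by omega
    have e2 : i ≠ i + 2 := by omega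
    have e3 : i + 1 ≠ i + 2 := by omega
    have e4 : i + 1 ≠ i := by omega
    have e5 : i + 2 ≠ i := by omega
    have e6 : i + 2 ≠ i + 1 := by omega
    refine Matrix.ext fun k l => ?_
    rw [mul_assoc, mul_assoc]
    simp only [sigma_mul_apply i h1, sigma_mul_apply (i + 1) h2,
      tau_mul_apply i h1, tau_mul_apply (i + 1) h2]
    by_cases hk1 : (k : ℕ) = i <;> by_cases hk2 : (k : ℕ) = i + 1 <;>
      by_cases hk3 : (k : ℕ) = i + 2 <;>
      by_cases hl1 : (l : ℕ) = i <;> by_cases hl2 : (l : ℕ) = i + 1 <;>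
      by_cases hl3 : (l : ℕ) = i + 2 <;>
      first
        | omega
        | (simp only [sigmaMat, tauMat, Fin.ext_iff, Fin.val_mk,
             hk1, hk2, hk3, hl1, hl2, hl3, e1, e2, e3, e4, e5, e6,
             if_true, if_false, ite_true, ite_false, eq_self_iff_true,
             ne_eq, not_false_eq_true, if_neg, if_pos]
           try (first
             | (split_ifs <;> (first
                 | rfl
                 | omega
                 | (ring_nf; simp [eps_sq, eps_cube, eps_mul_eps]; try ring_nf)))
             | rfl
             | omega
             | (ring_nf; simp [eps_sq, eps_cube, eps_mul_eps]; try ring_nf)))
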